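/- Let k be an algebraically closed field of characteristic p > 0 and A = k[X,Y]. The polynomial F = X^p + Y^{p+1} satisfies A^p ⊆ k[F,Y], hence Frac A is purely inseparable over k(F,Y) and F is a good pseudo field generator; moreover F is not a field generator in A (there is no G ∈ Frac A with k(F,G) = Frac A). -/

import Mathlib

set_option maxHeartbeats 1000000
set_option synthInstance.maxHeartbeats 400000

open MvPolynomial

noncomputable section

abbrev Poly2 (k : Type*) [Field k] := MvPolynomial (Fin 2) k
abbrev Frac2 (k : Type*) [Field k] := FractionRing (Poly2 k)

variable {k : Type*} [Field k]

/-- `A/(F)` is `k`-rational: `F` is irreducible and the fraction field of `A/(F)`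
is purely transcendental of transcendence degree 1 over `k`. -/
def KRational (F : Poly2 k) : Prop :=
  Irreducible F ∧
    Nonempty (FractionRing (Poly2 k ⧸ Ideal.span ({F} : Set (Poly2 k))) ≃ₐ[k] RatFunc k)

/-- `F` is a generally rational polynomial: `A/(F-λ)` is `k`-rational
for all but finitely many `λ ∈ k`. -/
def GenerallyRational (F : Poly2 k) : Prop :=
  {l : k | ¬ KRational (F - C l)}.Finite

/-- The image of `A = k[X,Y]` in its fraction field. -/
def emb (q : Poly2 k) : Frac2 k := algebraMap (Poly2 k) (Frac2 k) q

/-- The subfield `k(F,G)` of `Frac A`. -/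
def KFG (F : Poly2 k) (G : Frac2 k) : Subfield (Frac2 k) :=
  Subfield.closure (Set.range (algebraMap k (Frac2 k)) ∪ {emb F, G})

/-- The subfield `k(F)` of `Frac A`. -/
def KF (F : Poly2 k) : Subfield (Frac2 k) :=
  Subfield.closure (Set.range (algebraMap k (Frac2 k)) ∪ {emb F})

/-- A field extension `L/E` is purely inseparable iff every `x ∈ L` satisfies
`x ^ q ^ n ∈ E` for some `n`, where `q` is the exponential characteristic
(`q = 1` in characteristic zero). -/
def PurelyInsepOver {L : Type*} [Field L] (E : Subfield L) (q : ℕ) : Prop :=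
  ∀ x : L, ∃ n : ℕ, x ^ q ^ n ∈ E

/-- `F` is a pseudo field generator in `A`. -/
def IsPFG (F : Poly2 k) : Prop :=
  ∃ G : Frac2 k, PurelyInsepOver (KFG F G) (ringExpChar k)

/-- `F` is a good pseudo field generator in `A` (the auxiliary `G` can be taken in `A`). -/
def IsGoodPFG (F : Poly2 k) : Prop :=
  ∃ G : Poly2 k, PurelyInsepOver (KFG F (emb G)) (ringExpChar k)

/-- `F` is a field generator in `A`. -/
def IsFieldGen (F : Poly2 k) : Prop :=
  ∃ G : Frac2 k, KFG F G = ⊤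

/-- The localization `𝒜 = S⁻¹A`, `S = k[F] ∖ {0}`, viewed as a subset of `Frac A`. -/
def locSet (F : Poly2 k) : Set (Frac2 k) :=
  {x | ∃ (a : Poly2 k) (s : Polynomial k), s ≠ 0 ∧
    x = emb a / emb (Polynomial.aeval F s)}

/-- A dicritical of `F`: a valuation ring of `Frac A` over `k(F)`, distinct from `Frac A`,
not containing `𝒜 = S⁻¹A`. -/
def IsDicritical (F : Poly2 k) (O : ValuationSubring (Frac2 k)) : Prop :=
  (KF F : Set (Frac2 k)) ⊆ O ∧ O ≠ ⊤ ∧ ¬ (locSet F ⊆ O)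

/-- The dicritical `O` is purely inseparable: its residue field is a purely inseparable
extension of `k(F)`. -/
def IsPIDicritical (F : Poly2 k) (O : ValuationSubring (Frac2 k)) : Prop :=
  IsDicritical F O ∧
    ∀ x : IsLocalRing.ResidueField O, ∃ (n : ℕ) (y : O),
      (y : Frac2 k) ∈ KF F ∧ x ^ (ringExpChar k) ^ n = IsLocalRing.residue O y


-- ### Auxiliary definitions and lemmas ###

def F0 (k : Type*) [Field k] (p : ℕ) : Poly2 k := X 0 ^ p + X 1 ^ (p + 1)

theorem emb_injective : Function.Injective (emb (k := k)) :=
  IsFractionRing.injective (Poly2 k) (Frac2 k)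

theorem emb_ne_zero {q : Poly2 k} (h : q ≠ 0) : emb q ≠ 0 := by
  intro hc
  exact h (emb_injective (by rw [hc, emb, map_zero]))

theorem part1 (p : ℕ) (hp : p.Prime) [CharP k p] (a : Poly2 k) :
    a ^ p ∈ Algebra.adjoin k ({F0 k p, X 1} : Set (Poly2 k)) := by
  haveI : Fact p.Prime := ⟨hp⟩
  induction a using MvPolynomial.induction_on with
  | C c =>
      rw [← map_pow]
      exact (Algebra.adjoin k _).algebraMap_mem (c ^ p)
  | add f g hf hg =>
      rw [add_pow_char]
      exact add_mem hf hg
  | mul_X f i hf =>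
      rw [mul_pow]
      refine mul_mem hf ?_
      have hX1 : (X 1 : Poly2 k) ∈ Algebra.adjoin k ({F0 k p, X 1} : Set (Poly2 k)) :=
        Algebra.subset_adjoin (by simp)
      have hF0 : (F0 k p : Poly2 k) ∈ Algebra.adjoin k ({F0 k p, X 1} : Set (Poly2 k)) :=
        Algebra.subset_adjoin (by simp)
      have h2 : i = 0 ∨ i = 1 := by omega
      rcases h2 with h | h
      · subst h
        have : (X 0 : Poly2 k) ^ p = F0 k p - X 1 ^ (p + 1) := by
          rw [F0]; ring
        rw [this]
        exact sub_mem hF0 (pow_mem hX1 _)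
      · subst h
        exact pow_mem hX1 _

theorem emb_adjoin_mem (p : ℕ) {q : Poly2 k}
    (h : q ∈ Algebra.adjoin k ({F0 k p, X 1} : Set (Poly2 k))) :
    emb q ∈ KFG (F0 k p) (emb (X 1)) := by
  induction h using Algebra.adjoin_induction with
  | mem x hx =>
      rcases hx with h | h
      · rw [h]; exact Subfield.subset_closure (Or.inr (by simp))
      · rw [Set.mem_singleton_iff] at h; rw [h]
        exact Subfield.subset_closure (Or.inr (by simp))
  | algebraMap c =>
      have : emb (algebraMap k (Poly2 k) c) = algebraMap k (Frac2 k) c := by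
        rw [emb, ← IsScalarTower.algebraMap_apply]
      rw [this]
      exact Subfield.subset_closure (Or.inl ⟨c, rfl⟩)
  | add x y _ _ hx hy =>
      have h' : emb (x + y) = emb x + emb y := map_add (algebraMap (Poly2 k) (Frac2 k)) x y
      rw [h']; exact add_mem hx hy
  | mul x y _ _ hx hy =>
      have h' : emb (x * y) = emb x * emb y := map_mul (algebraMap (Poly2 k) (Frac2 k)) x y
      rw [h']; exact mul_mem hx hy

theorem ringExpChar_eq (p : ℕ) (hp : p.Prime) [CharP k p] : ringExpChar k = p := by
  haveI : ExpChar k p := ExpChar.prime hp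
  exact ringExpChar.eq k p

theorem part2 (p : ℕ) (hp : p.Prime) [CharP k p] :
    PurelyInsepOver (KFG (F0 k p) (emb (X 1))) (ringExpChar k) := by
  intro z
  refine ⟨1, ?_⟩
  rw [ringExpChar_eq p hp, pow_one]
  obtain ⟨a, b, hb, rfl⟩ := IsFractionRing.div_surjective (A := Poly2 k) z
  rw [div_pow, ← map_pow, ← map_pow]
  exact div_mem (emb_adjoin_mem p (part1 p hp a)) (emb_adjoin_mem p (part1 p hp b))

/-- the evaluation X0 ↦ X, X1 ↦ 0 -/
def eps0 (k : Type*) [Field k] : Poly2 k →ₐ[k] Polynomial k :=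
  aeval ![Polynomial.X, 0]

theorem eps0_F0 (p : ℕ) : eps0 k (F0 k p) = Polynomial.X ^ p := by
  simp [eps0, F0, zero_pow (Nat.succ_ne_zero p)]

theorem aeval_eq_comp (q : Polynomial k) (r : Polynomial k) :
    Polynomial.aeval q r = r.comp q := by
  rw [Polynomial.aeval_def, Polynomial.comp, Polynomial.algebraMap_eq]

theorem comp_Xp_injective (p : ℕ) (hp : 0 < p) {r : Polynomial k}
    (h : Polynomial.aeval ((Polynomial.X : Polynomial k) ^ p) r = 0) : r = 0 := by
  rw [aeval_eq_comp] at h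
  rcases Polynomial.comp_eq_zero_iff.mp h with h | ⟨_, h⟩
  · exact h
  · exfalso
    have := congrArg Polynomial.natDegree h
    rw [Polynomial.natDegree_X_pow, Polynomial.natDegree_C] at this
    omega

theorem aevalF0_injective (p : ℕ) (hp : 0 < p) :
    Function.Injective (Polynomial.aeval (F0 k p) : Polynomial k →ₐ[k] Poly2 k) := by
  have key : ∀ r : Polynomial k,
      eps0 k (Polynomial.aeval (F0 k p) r)
        = Polynomial.aeval ((Polynomial.X : Polynomial k) ^ p) r := by
    intro r
    rw [← Polynomial.aeval_algHom_apply (eps0 k) (F0 k p) r, eps0_F0]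
  intro r s hrs
  have h2 := congrArg (eps0 k) hrs
  rw [key, key] at h2
  have h3 : Polynomial.aeval ((Polynomial.X : Polynomial k) ^ p) (r - s) = 0 := by
    rw [map_sub, h2, sub_self]
  exact sub_eq_zero.mp (comp_Xp_injective p hp h3)

theorem phi_coeff_zero (p : ℕ) (hp : 0 < p) {R : Polynomial (Polynomial k)}
    (h : Polynomial.eval₂ (Polynomial.aeval (F0 k p) : Polynomial k →ₐ[k] Poly2 k).toRingHom
      (X 1) R = 0) : R.coeff 0 = 0 := by
  have h2 := congrArg (eps0 k).toRingHom h
  rw [Polynomial.hom_eval₂] at h2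
  have hx1 : (eps0 k).toRingHom (X 1) = 0 := by simp [eps0]
  rw [hx1, Polynomial.eval₂_at_zero, map_zero] at h2
  have : (eps0 k).toRingHom.comp (Polynomial.aeval (F0 k p) : Polynomial k →ₐ[k] Poly2 k).toRingHom
      (R.coeff 0) = Polynomial.aeval ((Polynomial.X : Polynomial k) ^ p) (R.coeff 0) := by
    show eps0 k (Polynomial.aeval (F0 k p) (R.coeff 0)) = _
    rw [← Polynomial.aeval_algHom_apply (eps0 k) (F0 k p) (R.coeff 0), eps0_F0]
  rw [this] at h2
  exact comp_Xp_injective p hp h2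

theorem phi_injective (p : ℕ) (hp : 0 < p) {R : Polynomial (Polynomial k)}
    (h : Polynomial.eval₂ (Polynomial.aeval (F0 k p) : Polynomial k →ₐ[k] Poly2 k).toRingHom
      (X 1) R = 0) : R = 0 := by
  set f := (Polynomial.aeval (F0 k p) : Polynomial k →ₐ[k] Poly2 k).toRingHom with hf
  suffices H : ∀ n (R : Polynomial (Polynomial k)), R.natDegree ≤ n →
      Polynomial.eval₂ f (X 1) R = 0 → R = 0 from H R.natDegree R le_rfl h
  intro n
  induction n with
  | zero =>
      intro R hdeg hR
      have h0 : R.coeff 0 = 0 := phi_coeff_zero p hp hR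
      rw [Polynomial.eq_C_of_natDegree_le_zero hdeg, h0, map_zero]
  | succ n ih =>
      intro R hdeg hR
      have h0 : R.coeff 0 = 0 := phi_coeff_zero p hp hR
      obtain ⟨R', rfl⟩ := Polynomial.X_dvd_iff.mpr h0
      rw [Polynomial.eval₂_mul, Polynomial.eval₂_X] at hR
      have hX1 : (X 1 : Poly2 k) ≠ 0 := MvPolynomial.X_ne_zero 1
      have hR' : Polynomial.eval₂ f (X 1) R' = 0 := by
        rcases mul_eq_zero.mp hR with h | h
        · exact absurd h hX1
        · exact h
      rcases eq_or_ne R' 0 with h | h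
      · rw [h, mul_zero]
      · have : R'.natDegree ≤ n := by
          have := Polynomial.natDegree_X_mul h (R := Polynomial k)
          omega
        rw [ih R' this hR', mul_zero]

/-- if `c^p = emb M` then `M` is a `p`-th power of a polynomial. -/
theorem pth_power_lemma (p : ℕ) (hp : 0 < p) (c : Frac2 k) (M : Poly2 k)
    (h : c ^ p = emb M) : ∃ T : Poly2 k, T ^ p = M := by
  set R := IsFractionRing.num (Poly2 k) c with hR
  set Sd := IsFractionRing.den (Poly2 k) c with hSd
  have hfrac : emb R / emb (Sd : Poly2 k) = c := IsFractionRing.mk'_num_den' (Poly2 k) c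
  have hS0 : (Sd : Poly2 k) ≠ 0 := nonZeroDivisors.coe_ne_zero Sd
  have hrel : IsRelPrime R (Sd : Poly2 k) := IsFractionRing.num_den_reduced (Poly2 k) c
  have hpoly : R ^ p = M * (Sd : Poly2 k) ^ p := by
    apply emb_injective
    have hembS : emb (Sd : Poly2 k) ≠ 0 := emb_ne_zero hS0
    have : (emb R / emb (Sd : Poly2 k)) ^ p = emb M := by rw [hfrac, h]
    show (algebraMap (Poly2 k) (Frac2 k)) _ = (algebraMap (Poly2 k) (Frac2 k)) _
    rw [map_pow, map_mul, map_pow]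
    field_simp [emb] at this ⊢
    rw [div_pow, div_eq_iff (pow_ne_zero _ hembS)] at this; exact this
  have hdvd : (Sd : Poly2 k) ^ p ∣ R ^ p := Dvd.intro M (by rw [mul_comm]; exact hpoly.symm)
  have hrelpow : IsRelPrime (R ^ p) ((Sd : Poly2 k) ^ p) := IsRelPrime.pow hrel
  have hunit : IsUnit ((Sd : Poly2 k) ^ p) := hrelpow hdvd dvd_rfl
  have hSunit : IsUnit (Sd : Poly2 k) :=
    isUnit_of_dvd_unit (dvd_pow_self _ (by omega : p ≠ 0)) hunit
  refine ⟨R * ↑hSunit.unit⁻¹, ?_⟩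
  have hone : (↑hSunit.unit⁻¹ : Poly2 k) * (Sd : Poly2 k) = 1 := hSunit.val_inv_mul
  calc (R * ↑hSunit.unit⁻¹) ^ p = R ^ p * (↑hSunit.unit⁻¹ : Poly2 k) ^ p := by ring
    _ = M * ((↑hSunit.unit⁻¹ : Poly2 k) * (Sd : Poly2 k)) ^ p := by rw [hpoly]; ring
    _ = M := by rw [hone, one_pow, mul_one]

theorem isRelPrime_map {α β : Type*} [CommRing α] [CommRing β] (e : α ≃+* β) {a b : α}
    (h : IsRelPrime a b) : IsRelPrime (e a) (e b) := by
  intro c hc1 hc2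
  have h1 : e.symm c ∣ a := by
    have := map_dvd e.symm hc1
    simpa using this
  have h2 : e.symm c ∣ b := by
    have := map_dvd e.symm hc2
    simpa using this
  have := (h h1 h2).map e
  simpa using this

theorem core (p : ℕ) (hp : p.Prime) [CharP k p] (a b : Frac2 k)
    (h : emb (X 0) = a ^ p + b ^ (p + 1)) : False := by
  haveI : Fact p.Prime := ⟨hp⟩
  have hp2 : 2 ≤ p := hp.two_le
  set A := IsFractionRing.num (Poly2 k) b with hA
  set Bd := IsFractionRing.den (Poly2 k) b with hBd
  set B : Poly2 k := (Bd : Poly2 k) with hB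
  have hfrac : emb A / emb B = b := IsFractionRing.mk'_num_den' (Poly2 k) b
  have hB0 : B ≠ 0 := nonZeroDivisors.coe_ne_zero Bd
  have hembB : emb B ≠ 0 := emb_ne_zero hB0
  have hrel : IsRelPrime A B := IsFractionRing.num_den_reduced (Poly2 k) b
  set M : Poly2 k := X 0 * B ^ (2 * p) - A ^ (p + 1) * B ^ (p - 1) with hM
  have hsplit : (2 : ℕ) * p = (p + 1) + (p - 1) := by omega
  have hc : (a * emb B ^ 2) ^ p = emb M := by
    have ha : a ^ p = emb (X 0) - b ^ (p + 1) := by rw [h]; ring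
    have hbp : b ^ (p + 1) * emb B ^ (2 * p) = emb A ^ (p + 1) * emb B ^ (p - 1) := by
      rw [← hfrac, div_pow, hsplit, pow_add]
      field_simp
      ring
    have hM2 : emb M = emb (X 0) * emb B ^ (2 * p) - emb A ^ (p + 1) * emb B ^ (p - 1) := by
      show (algebraMap (Poly2 k) (Frac2 k)) _ = _
      rw [hM]
      push_cast [map_sub, map_mul, map_pow]
      rfl
    calc (a * emb B ^ 2) ^ p = a ^ p * emb B ^ (2 * p) := by
          rw [mul_pow, ← pow_mul]
      _ = emb (X 0) * emb B ^ (2 * p) - b ^ (p + 1) * emb B ^ (2 * p) := by rw [ha]; ring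
      _ = emb M := by rw [hbp, hM2]
  obtain ⟨T, hT⟩ := pth_power_lemma p hp.pos _ M hc
  have Estar : X 0 * B ^ (2 * p) = T ^ p + A ^ (p + 1) * B ^ (p - 1) := by
    rw [hM] at hT; linear_combination -hT
  -- transfer to Polynomial (MvPolynomial (Fin 1) k)
  set A₁ := (MvPolynomial.finSuccEquiv k 1) A with hA₁
  set B₁ := (MvPolynomial.finSuccEquiv k 1) B with hB₁
  set T₁ := (MvPolynomial.finSuccEquiv k 1) T with hT₁
  have hB₁0 : B₁ ≠ 0 := by
    rw [hB₁]; intro hc'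
    exact hB0 (by simpa using congrArg (MvPolynomial.finSuccEquiv k 1).symm hc')
  have hrel1 : IsRelPrime A₁ B₁ := isRelPrime_map (MvPolynomial.finSuccEquiv k 1).toRingEquiv hrel
  have ES : Polynomial.X * B₁ ^ (2 * p) = T₁ ^ p + A₁ ^ (p + 1) * B₁ ^ (p - 1) := by
    have h5 := congrArg (MvPolynomial.finSuccEquiv k 1) Estar
    simpa [map_add, map_mul, map_pow, MvPolynomial.finSuccEquiv_X_zero] using h5
  -- derivative computation
  haveI : CharP (MvPolynomial (Fin 1) k) p := inferInstance
  have hcast0 : ((2 * p : ℕ) : MvPolynomial (Fin 1) k) = 0 := by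
    push_cast [CharP.cast_eq_zero (MvPolynomial (Fin 1) k) p]; ring
  have hcastp : ((p : ℕ) : MvPolynomial (Fin 1) k) = 0 :=
    CharP.cast_eq_zero (MvPolynomial (Fin 1) k) p
  have hcast1 : ((p + 1 : ℕ) : MvPolynomial (Fin 1) k) = 1 := by
    push_cast [hcastp]; ring
  have hcastm : ((p - 1 : ℕ) : MvPolynomial (Fin 1) k) = -1 := by
    rw [Nat.cast_sub hp.one_le, hcastp]; ring
  have hexp1 : p + 1 - 1 = p := by omega
  have hexp2 : p - 1 - 1 = p - 2 := by omega
  have ED : B₁ ^ (2 * p) = A₁ ^ p * Polynomial.derivative A₁ * B₁ ^ (p - 1)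
      - A₁ ^ (p + 1) * (B₁ ^ (p - 2) * Polynomial.derivative B₁) := by
    have h6 := congrArg Polynomial.derivative ES
    rw [Polynomial.derivative_mul, Polynomial.derivative_X, Polynomial.derivative_add,
      Polynomial.derivative_mul, Polynomial.derivative_pow B₁ (2 * p),
      Polynomial.derivative_pow T₁ p, Polynomial.derivative_pow A₁ (p + 1),
      Polynomial.derivative_pow B₁ (p - 1), hexp1, hexp2] at h6
    simp only [hcast0, hcastp, hcast1, hcastm, map_zero, map_one, map_neg] at h6
    linear_combination h6
  have hpow1 : B₁ ^ (p - 1) = B₁ ^ (p - 2) * B₁ := by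
    rw [← pow_succ]; congr 1; omega
  have hpow2 : B₁ ^ (2 * p) = B₁ ^ (p - 2) * B₁ ^ (p + 2) := by
    rw [← pow_add]; congr 1; omega
  have hI : B₁ ^ (p + 2)
      = A₁ ^ p * (Polynomial.derivative A₁ * B₁ - A₁ * Polynomial.derivative B₁) := by
    have hBp2 : B₁ ^ (p - 2) ≠ 0 := pow_ne_zero _ hB₁0
    apply mul_left_cancel₀ hBp2
    rw [← hpow2, ED, hpow1]; ring
  -- A₁ is a unit
  have hdvdA : A₁ ∣ B₁ ^ (p + 2) := by
    refine ⟨A₁ ^ (p - 1) * (Polynomial.derivative A₁ * B₁ - A₁ * Polynomial.derivative B₁), ?_⟩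
    rw [hI]
    have : A₁ ^ p = A₁ * A₁ ^ (p - 1) := by
      rw [← pow_succ']; congr 1; omega
    rw [this]; ring
  have hA₁unit : IsUnit A₁ := (hrel1.pow_right (n := p + 2)) dvd_rfl hdvdA
  obtain ⟨r, hr, hCr⟩ := Polynomial.isUnit_iff.mp hA₁unit
  have hI2 : B₁ ^ (p + 2) = -(Polynomial.C (r ^ (p + 1)) * Polynomial.derivative B₁) := by
    rw [hI, ← hCr]
    simp only [Polynomial.derivative_C]
    rw [map_pow]
    ring
  rcases eq_or_ne (Polynomial.derivative B₁) 0 with hd0 | hd0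
  · rw [hd0, mul_zero, neg_zero] at hI2
    exact hB₁0 (pow_eq_zero_iff (by omega) |>.mp hI2)
  · have hr0 : r ≠ 0 := hr.ne_zero
    have hC0 : (Polynomial.C (r ^ (p + 1)) : Polynomial (MvPolynomial (Fin 1) k)) ≠ 0 := by
      simpa using pow_ne_zero (p + 1) hr0
    have hndB : B₁.natDegree ≠ 0 := by
      intro h0
      obtain ⟨x, hx⟩ := Polynomial.natDegree_eq_zero.mp h0
      rw [← hx, Polynomial.derivative_C] at hd0
      exact hd0 rfl
    have h7 := congrArg Polynomial.natDegree hI2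
    rw [Polynomial.natDegree_pow, Polynomial.natDegree_neg,
      Polynomial.natDegree_mul hC0 hd0, Polynomial.natDegree_C] at h7
    have h8 : (Polynomial.derivative B₁).natDegree < B₁.natDegree :=
      Polynomial.natDegree_derivative_lt hndB
    have h9 : B₁.natDegree ≤ (p + 2) * B₁.natDegree := Nat.le_mul_of_pos_left _ (by omega)
    omega

def embA (k : Type*) [Field k] : Poly2 k →ₐ[k] Frac2 k :=
  IsScalarTower.toAlgHom k (Poly2 k) (Frac2 k)

def embgA (k : Type*) [Field k] (p : ℕ) : Polynomial k →ₐ[k] Frac2 k :=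
  (embA k).comp (Polynomial.aeval (F0 k p))

/-- `z` is algebraic over `k[F]`. -/
def AlgOverKF (p : ℕ) (z : Frac2 k) : Prop :=
  ∃ R : Polynomial (Polynomial k), R ≠ 0 ∧
    Polynomial.eval₂ (embgA k p).toRingHom z R = 0

theorem embgA_injective (p : ℕ) (hp : 0 < p) :
    Function.Injective (embgA k p) := by
  rw [embgA, AlgHom.coe_comp]
  exact Function.Injective.comp (emb_injective) (aevalF0_injective p hp)

theorem K1 (p : ℕ) (hp : 0 < p) : ¬ AlgOverKF (k := k) p (emb (X 1)) := by
  rintro ⟨R, hR0, hR⟩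
  apply hR0
  apply phi_injective p hp (k := k)
  apply emb_injective
  show algebraMap (Poly2 k) (Frac2 k) _ = algebraMap (Poly2 k) (Frac2 k) _
  rw [Polynomial.hom_eval₂, map_zero]
  exact hR

theorem aeval_F_eq (p : ℕ) :
    (Polynomial.aeval (emb (F0 k p)) : Polynomial k →ₐ[k] Frac2 k) = embgA k p := by
  rw [embgA, ← Polynomial.aeval_algHom]
  rfl

theorem aeval_FG_injective (p : ℕ) (hp : p.Prime) (G : Frac2 k)
    (hT : KFG (F0 k p) G = ⊤) :
    Function.Injective (aeval (R := k) ![emb (F0 k p), G]) := by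
  by_cases hG : AlgOverKF p G
  · -- then everything in k(F,G) = ⊤ is algebraic over k[F]; contradiction with K1
    exfalso
    letI : Algebra (Polynomial k) (Frac2 k) := (embgA k p).toRingHom.toAlgebra
    have hinjg : Function.Injective (embgA k p) := embgA_injective p hp.pos
    set χ : RatFunc k →ₐ[k] Frac2 k := IsFractionRing.liftAlgHom (K := RatFunc k) hinjg with hχ
    have hχmap : ∀ r : Polynomial k, χ (algebraMap (Polynomial k) (RatFunc k) r) = embgA k p r := by
      intro r
      rw [hχ, IsFractionRing.liftAlgHom_apply]
      exact IsFractionRing.lift_algebraMap hinjg r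
    letI : Algebra (RatFunc k) (Frac2 k) := χ.toRingHom.toAlgebra
    haveI : IsScalarTower (Polynomial k) (RatFunc k) (Frac2 k) :=
      IsScalarTower.of_algebraMap_eq (fun r => (hχmap r).symm)
    have hAO : ∀ z : Frac2 k, AlgOverKF p z ↔ IsAlgebraic (Polynomial k) z := by
      intro z
      constructor
      · rintro ⟨R, hR0, hR⟩
        exact ⟨R, hR0, by rw [Polynomial.aeval_def]; exact hR⟩
      · rintro ⟨R, hR0, hR⟩
        exact ⟨R, hR0, by rw [Polynomial.aeval_def] at hR; exact hR⟩
    have hGalg : IsAlgebraic (RatFunc k) G :=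
      (IsFractionRing.isAlgebraic_iff (Polynomial k) (RatFunc k) (Frac2 k)).mp ((hAO G).mp hG)
    have hGint : IsIntegral (RatFunc k) G := isAlgebraic_iff_isIntegral.mp hGalg
    haveI halgJ : Algebra.IsAlgebraic (RatFunc k)
        (IntermediateField.adjoin (RatFunc k) ({G} : Set (Frac2 k))) :=
      IntermediateField.isAlgebraic_adjoin_simple hGint
    set J := IntermediateField.adjoin (RatFunc k) ({G} : Set (Frac2 k)) with hJ
    have hsub : KFG (F0 k p) G ≤ J.toSubfield := by
      rw [KFG]
      apply Subfield.closure_le.mpr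
      rintro z (⟨c, rfl⟩ | hz)
      · have : algebraMap k (Frac2 k) c
            = algebraMap (RatFunc k) (Frac2 k) (algebraMap k (RatFunc k) c) :=
          (χ.commutes c).symm
        rw [this]
        exact J.algebraMap_mem _
      · rcases hz with h | h
        · have h1 : z = algebraMap (RatFunc k) (Frac2 k)
              (algebraMap (Polynomial k) (RatFunc k) Polynomial.X) := by
            rw [h]
            show emb (F0 k p) = χ (algebraMap (Polynomial k) (RatFunc k) Polynomial.X)
            rw [hχmap]
            show emb (F0 k p) = emb (Polynomial.aeval (F0 k p) Polynomial.X)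
            rw [Polynomial.aeval_X]
          rw [h1]
          exact J.algebraMap_mem _
        · rw [Set.mem_singleton_iff] at h
          rw [h]
          exact IntermediateField.mem_adjoin_simple_self (RatFunc k) G
    have hy' : emb (X 1) ∈ J := by
      apply hsub
      rw [hT]
      exact Subfield.mem_top _
    have hyalg : IsAlgebraic (RatFunc k) (emb (X 1) : Frac2 k) := by
      have := Algebra.IsAlgebraic.isAlgebraic (R := RatFunc k) (A := J) ⟨emb (X 1), hy'⟩
      exact IntermediateField.isAlgebraic_iff.mp this
    exact K1 p hp.pos ((hAO (emb (X 1))).mpr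
      ((IsFractionRing.isAlgebraic_iff (Polynomial k) (RatFunc k) (Frac2 k)).mpr hyalg))
  · -- transcendental case: algebraic independence
    have htF : Transcendental k (emb (F0 k p)) := by
      rw [transcendental_iff_injective, aeval_F_eq]
      exact embgA_injective p hp.pos
    have hxF : AlgebraicIndependent k ![emb (F0 k p)] :=
      algebraicIndependent_iff_transcendental.mpr htF
    have hTG : Transcendental (Algebra.adjoin k (Set.range ![emb (F0 k p)])) G := by
      intro halg
      rw [show Set.range ![emb (F0 k p)] = {emb (F0 k p)} by simp] at halg
      rw [Algebra.adjoin_singleton_eq_range_aeval] at halg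
      obtain ⟨P, hP0, hPG⟩ := halg
      obtain ⟨R, rfl⟩ := Polynomial.map_surjective _
        (AlgHom.rangeRestrict_surjective
          (Polynomial.aeval (emb (F0 k p)) : Polynomial k →ₐ[k] Frac2 k)) P
      apply hG
      refine ⟨R, ?_, ?_⟩
      · rintro rfl; simp at hP0
      · have hcomp : (algebraMap ((Polynomial.aeval (emb (F0 k p)) :
            Polynomial k →ₐ[k] Frac2 k).range) (Frac2 k)).comp
            ((Polynomial.aeval (emb (F0 k p)) :
              Polynomial k →ₐ[k] Frac2 k).rangeRestrict : _ →ₐ[k] _).toRingHom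
            = (embgA k p).toRingHom := by
          refine RingHom.ext fun r => ?_
          show ((Polynomial.aeval (emb (F0 k p))).rangeRestrict r : Frac2 k) = embgA k p r
          rw [← aeval_F_eq p]
          rfl
        rw [Polynomial.aeval_def, Polynomial.eval₂_map, hcomp] at hPG
        exact hPG
    have hOpt : AlgebraicIndependent k (fun o : Option (Fin 1) => o.elim G ![emb (F0 k p)]) :=
      (hxF.option_iff_transcendental G).mpr hTG
    have hPair : AlgebraicIndependent k ![emb (F0 k p), G] := by
      have hcomp := hOpt.comp ![some 0, none] (by decide)
      have : (fun o : Option (Fin 1) => o.elim G ![emb (F0 k p)]) ∘ ![some 0, none]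
          = ![emb (F0 k p), G] := by
        funext i
        fin_cases i <;> rfl
      rwa [this] at hcomp
    exact algebraicIndependent_iff_injective_aeval.mp hPair

theorem notFG (p : ℕ) (hp : p.Prime) [CharP k p] :
    ¬ ∃ G : Frac2 k, KFG (F0 k p) G = ⊤ := by
  rintro ⟨G, hT⟩
  have hinj := aeval_FG_injective p hp G hT
  have hinj' : Function.Injective
      (aeval (R := k) ![emb (F0 k p), G] : Poly2 k →ₐ[k] Frac2 k) := hinj
  set ψ : Frac2 k →ₐ[k] Frac2 k := IsFractionRing.liftAlgHom (K := Frac2 k) hinj' with hψ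
  have hψemb : ∀ q : Poly2 k, ψ (emb q) = aeval ![emb (F0 k p), G] q := by
    intro q
    rw [hψ, IsFractionRing.liftAlgHom_apply]
    exact IsFractionRing.lift_algebraMap hinj' q
  have hrange : ψ.fieldRange
      = IntermediateField.adjoin k ({emb (F0 k p), G} : Set (Frac2 k)) := by
    apply IsFractionRing.liftAlgHom_fieldRange_eq_of_range_eq
    rw [← Algebra.adjoin_range_eq_range_aeval]
    congr 1
    simp [Set.pair_comm]
  have hsurj : ∀ z : Frac2 k, ∃ w, ψ w = z := by
    intro z
    have hz : z ∈ (IntermediateField.adjoin k ({emb (F0 k p), G} : Set (Frac2 k))).toSubfield := by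
      rw [IntermediateField.adjoin_toSubfield]
      have : Subfield.closure (Set.range (algebraMap k (Frac2 k)) ∪ {emb (F0 k p), G}) = ⊤ := hT
      rw [this]
      exact Subfield.mem_top _
    rw [← hrange] at hz
    obtain ⟨w, hw⟩ := hz
    exact ⟨w, hw⟩
  obtain ⟨a, ha⟩ := hsurj (emb (X 0))
  obtain ⟨b, hb⟩ := hsurj (emb (X 1))
  have hψinj : Function.Injective ψ := ψ.toRingHom.injective
  have hrel : emb (X 0) = a ^ p + b ^ (p + 1) := by
    apply hψinj
    rw [map_add, map_pow, map_pow, ha, hb, hψemb]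
    have h1 : aeval (R := k) ![emb (F0 k p), G] (X 0) = emb (F0 k p) := by simp
    rw [h1]
    show algebraMap (Poly2 k) (Frac2 k) (F0 k p) = _
    rw [F0, map_add, map_pow, map_pow]
    rfl
  exact core p hp a b hrel


/-- **Theorem (Statement 17).** Let `char k = p > 0` and `F = X^p + Y^{p+1} ∈ A = k[X,Y]`.
Then `A^p ⊆ k[F,Y]`, `Frac A` is purely inseparable over `k(F,Y)`, so `F` is a good
pseudo field generator in `A`; but `F` is not a field generator in `A`. -/
theorem example_Xp_add_Ypp1
    {k : Type*} [Field k] [IsAlgClosed k] (p : ℕ) (hp : p.Prime) [CharP k p] :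
    (∀ a : Poly2 k, a ^ p ∈ Algebra.adjoin k
        ({(X 0 : Poly2 k) ^ p + (X 1) ^ (p + 1), X 1} : Set (Poly2 k))) ∧
      PurelyInsepOver (KFG ((X 0 : Poly2 k) ^ p + (X 1) ^ (p + 1)) (emb (X 1)))
        (ringExpChar k) ∧
      IsGoodPFG ((X 0 : Poly2 k) ^ p + (X 1) ^ (p + 1)) ∧
      ¬ IsFieldGen ((X 0 : Poly2 k) ^ p + (X 1) ^ (p + 1)) := by
  refine ⟨fun a => part1 p hp a, part2 p hp, ⟨X 1, part2 p hp⟩, notFG p hp⟩
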